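/- For 0 < q < p ≤ 1, n ∈ ℕ, and x ∈ [0,1], D_n^{p,q}(e₂, x) = (p+q) p^{n+1} [n]_{p,q} x / ([n+2]_{p,q}[n+3]_{p,q}) + ([n]_{p,q} - p^{n-1}) p² q [n]_{p,q} x² / ([n+2]_{p,q}[n+3]_{p,q}), where e₂(t) = t². -/

import Mathlib

noncomputable section

/-- The (p,q)-number [n]_{p,q} = (p^n - q^n)/(p - q). -/
def pqNum (p q : ℝ) (n : ℕ) : ℝ := (p ^ n - q ^ n) / (p - q)

/-- The (p,q)-factorial [n]_{p,q}!. -/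
def pqFactorial (p q : ℝ) (n : ℕ) : ℝ := ∏ k ∈ Finset.range n, pqNum p q (k + 1)

/-- The (p,q)-binomial coefficient. -/
def pqBinom (p q : ℝ) (n k : ℕ) : ℝ :=
  pqFactorial p q n / (pqFactorial p q (n - k) * pqFactorial p q k)

/-- The (p,q)-power basis (a ⊖ b)^n_{p,q} = ∏_{j=0}^{n-1} (p^j a - q^j b). -/
def pqPow (p q a b : ℝ) (n : ℕ) : ℝ := ∏ j ∈ Finset.range n, (p ^ j * a - q ^ j * b)

/-- The (p,q)-derivative. -/
def pqDeriv (p q : ℝ) (f : ℝ → ℝ) (x : ℝ) : ℝ := (f (p * x) - f (q * x)) / ((p - q) * x)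

/-- The (p,q)-integral of f over [0,1] (case 0 < q < p). -/
def pqInt (p q : ℝ) (f : ℝ → ℝ) : ℝ :=
  (p - q) * ∑' k : ℕ, (q ^ k / p ^ (k + 1)) * f (q ^ k / p ^ (k + 1))

/-- The (p,q)-Beta function B_{p,q}(m,n) = ∫₀¹ x^{m-1} (1 ⊖ qx)^{n-1} d_{p,q}x. -/
def pqBeta (p q : ℝ) (m n : ℕ) : ℝ :=
  pqInt p q (fun x => x ^ (m - 1) * pqPow p q 1 (q * x) (n - 1))

/-- The (p,q)-Gamma function: Γ_{p,q}(n+1) = [n]_{p,q}!. -/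
def pqGamma (p q : ℝ) (n : ℕ) : ℝ := pqFactorial p q (n - 1)

/-- The (p,q)-Bernstein basis b_{n,k}^{p,q}(1,x). -/
def bBasis (p q : ℝ) (n k : ℕ) (x : ℝ) : ℝ :=
  pqBinom p q n k * p ^ (k * (k - 1) / 2) / p ^ (n * (n - 1) / 2) * x ^ k *
    pqPow p q 1 x (n - k)

/-- The kernel b_{n,k}^{p,q}(t) = [n choose k] t^k (1 ⊖ qt)^{n-k}. -/
def bKernel (p q : ℝ) (n k : ℕ) (t : ℝ) : ℝ :=
  pqBinom p q n k * t ^ k * pqPow p q 1 (q * t) (n - k)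

/-- The (p,q)-Bernstein operator B_{n,p,q}(f,x). -/
def pqBernstein (p q : ℝ) (n : ℕ) (f : ℝ → ℝ) (x : ℝ) : ℝ :=
  ∑ k ∈ Finset.range (n + 1),
    bBasis p q n k x * f (p ^ (n - k) * pqNum p q k / pqNum p q n)

/-- The (p,q)-Bernstein-Durrmeyer operator D_n^{p,q}(f,x). -/
def pqDurrmeyer (p q : ℝ) (n : ℕ) (f : ℝ → ℝ) (x : ℝ) : ℝ :=
  pqNum p q (n + 1) *
    ∑ k ∈ Finset.Icc 1 n, (p ^ ((n - k + 1) * (n + k) / 2))⁻¹ * bBasis p q n k x *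
      pqInt p q (fun t => bKernel p q n (k - 1) t * f t)
  + bBasis p q n 0 x * f 0

section Basics

variable {p q : ℝ}

lemma pq_p_pos (hq : 0 < q) (hqp : q < p) : 0 < p := hq.trans hqp

lemma pqNum_pos (hq : 0 < q) (hqp : q < p) (m : ℕ) : 0 < pqNum p q (m + 1) := by
  have hp := pq_p_pos hq hqp
  have : q ^ (m+1) < p ^ (m+1) := pow_lt_pow_left₀ hqp hq.le (by omega)
  exact div_pos (by linarith) (by linarith)

lemma pqNum_ne (hq : 0 < q) (hqp : q < p) {m : ℕ} (hm : 1 ≤ m) : pqNum p q m ≠ 0 := by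
  obtain ⟨k, rfl⟩ := Nat.exists_eq_add_of_le' hm
  exact (pqNum_pos hq hqp k).ne'

lemma pqFactorial_pos (hq : 0 < q) (hqp : q < p) (m : ℕ) : 0 < pqFactorial p q m := by
  refine Finset.prod_pos fun k _ => pqNum_pos hq hqp k

lemma pqFactorial_ne (hq : 0 < q) (hqp : q < p) (m : ℕ) : pqFactorial p q m ≠ 0 :=
  (pqFactorial_pos hq hqp m).ne'

lemma pqFactorial_zero : pqFactorial p q 0 = 1 := by simp [pqFactorial]

lemma pqFactorial_succ (m : ℕ) :
    pqFactorial p q (m + 1) = pqFactorial p q m * pqNum p q (m + 1) :=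
  Finset.prod_range_succ _ m

lemma pqNum_zero : pqNum p q 0 = 0 := by simp [pqNum]

lemma pqNum_succ (hqp : q < p) (m : ℕ) :
    pqNum p q (m + 1) = p ^ m + q * pqNum p q m := by
  have h : p - q ≠ 0 := by linarith
  unfold pqNum
  field_simp
  ring

/-- [a+b] = p^a [b] + q^b [a]. -/
lemma pqNum_add (hqp : q < p) (a b : ℕ) :
    pqNum p q (a + b) = p ^ a * pqNum p q b + q ^ b * pqNum p q a := by
  have h : p - q ≠ 0 := by linarith
  unfold pqNum
  field_simp
  ring

lemma pqBinom_zero (hq : 0 < q) (hqp : q < p) (n : ℕ) : pqBinom p q n 0 = 1 := by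
  rw [pqBinom]
  simp only [Nat.sub_zero, pqFactorial_zero, mul_one]
  exact div_self (pqFactorial_ne hq hqp n)

lemma pqBinom_self (hq : 0 < q) (hqp : q < p) (n : ℕ) : pqBinom p q n n = 1 := by
  rw [pqBinom]
  simp only [Nat.sub_self, pqFactorial_zero, one_mul]
  exact div_self (pqFactorial_ne hq hqp n)

/-- Pascal rule: [n+1, k] with n = m + j + 1, k = j + 1. -/
lemma pqBinom_pascal (hq : 0 < q) (hqp : q < p) (m j : ℕ) :
    pqBinom p q (m + j + 2) (j + 1) =
      p ^ (j + 1) * pqBinom p q (m + j + 1) (j + 1) +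
        q ^ (m + 1) * pqBinom p q (m + j + 1) j := by
  have h1 : m + j + 2 - (j + 1) = m + 1 := by omega
  have h2 : m + j + 1 - (j + 1) = m := by omega
  have h3 : m + j + 1 - j = m + 1 := by omega
  rw [pqBinom, pqBinom, pqBinom, h1, h2, h3]
  have key : pqNum p q (m + j + 2) =
      p ^ (j + 1) * pqNum p q (m + 1) + q ^ (m + 1) * pqNum p q (j + 1) := by
    have := pqNum_add hqp (j + 1) (m + 1)
    rw [show j + 1 + (m + 1) = m + j + 2 by omega] at this
    rw [this]
  rw [show pqFactorial p q (m + j + 2) = pqFactorial p q (m + j + 1) * pqNum p q (m + j + 2)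
    from pqFactorial_succ _, key, pqFactorial_succ m, pqFactorial_succ j]
  have hfm := pqFactorial_ne hq hqp m
  have hfj := pqFactorial_ne hq hqp j
  have hnm := pqNum_ne hq hqp (m := m + 1) (by omega)
  have hnj := pqNum_ne hq hqp (m := j + 1) (by omega)
  field_simp

/-- [n, k+1] * [k+1] = [n] * [n-1, k]  with n = m + k + 1. -/
lemma pqBinom_mul (hq : 0 < q) (hqp : q < p) (m k : ℕ) :
    pqBinom p q (m + k + 1) (k + 1) * pqNum p q (k + 1) =
      pqNum p q (m + k + 1) * pqBinom p q (m + k) k := by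
  have h1 : m + k + 1 - (k + 1) = m := by omega
  have h2 : m + k - k = m := by omega
  rw [pqBinom, pqBinom, h1, h2, pqFactorial_succ (m + k), pqFactorial_succ k]
  have hfm := pqFactorial_ne hq hqp m
  have hfk := pqFactorial_ne hq hqp k
  have hnk := pqNum_ne hq hqp (m := k + 1) (by omega)
  field_simp

end Basics
section Moments

variable {p q : ℝ}

lemma tri_succ (k : ℕ) : k * (k + 1) / 2 = k * (k - 1) / 2 + k := by
  cases k with
  | zero => simp
  | succ m =>
    obtain ⟨c, hc⟩ := Nat.even_mul_succ_self m
    have h1 : (m + 1) * (m + 1 + 1) = 2 * c + 2 * (m + 1) := by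
      rw [show (m + 1) * (m + 1 + 1) = m * (m + 1) + 2 * (m + 1) by ring, hc]; ring
    have h2 : (m + 1) * (m + 1 - 1) = 2 * c := by
      rw [show (m + 1) * (m + 1 - 1) = m * (m + 1) by simp [Nat.mul_comm], hc]; ring
    omega

/-- The fundamental partition-of-unity sum (unnormalized). -/
lemma sumT (hq : 0 < q) (hqp : q < p) (x : ℝ) (n : ℕ) :
    ∑ k ∈ Finset.range (n + 1),
      pqBinom p q n k * p ^ (k * (k - 1) / 2) * x ^ k * pqPow p q 1 x (n - k) =
      p ^ (n * (n - 1) / 2) := by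
  induction n with
  | zero => simp [pqBinom_zero hq hqp, pqPow]
  | succ n ih =>
    have key : ∀ k ∈ Finset.range (n + 1),
        (p ^ k * (pqBinom p q n k * p ^ (k * (k - 1) / 2) * x ^ k * pqPow p q 1 x (n + 1 - k))
          + q ^ (n - k) * (pqBinom p q n k * p ^ (k * (k + 1) / 2) * x ^ (k + 1) *
            pqPow p q 1 x (n - k))) =
        p ^ n * (pqBinom p q n k * p ^ (k * (k - 1) / 2) * x ^ k * pqPow p q 1 x (n - k)) := by
      intro k hk
      have hkn : k ≤ n := by simpa using Nat.lt_succ_iff.mp (Finset.mem_range.mp hk)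
      have hpow : pqPow p q 1 x (n + 1 - k) =
          pqPow p q 1 x (n - k) * (p ^ (n - k) * 1 - q ^ (n - k) * x) := by
        rw [show n + 1 - k = (n - k) + 1 by omega, pqPow, pqPow, Finset.prod_range_succ]
      have he1 : p ^ (k * (k + 1) / 2) = p ^ (k * (k - 1) / 2) * p ^ k := by
        rw [← pow_add, tri_succ]
      have he2 : (p:ℝ) ^ k * p ^ (k * (k - 1) / 2) * p ^ (n - k) =
          p ^ n * p ^ (k * (k - 1) / 2) := by
        rw [← pow_add, ← pow_add, ← pow_add]
        congr 1
        omega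
      rw [hpow, he1, pow_succ]
      linear_combination (pqBinom p q n k * x ^ k * pqPow p q 1 x (n - k)) * he2
    set F : ℕ → ℝ := fun k => p ^ k *
      (pqBinom p q n k * p ^ (k * (k - 1) / 2) * x ^ k * pqPow p q 1 x (n + 1 - k)) with hF
    set G : ℕ → ℝ := fun k => q ^ (n - k) *
      (pqBinom p q n k * p ^ (k * (k + 1) / 2) * x ^ (k + 1) * pqPow p q 1 x (n - k)) with hG
    have hmid : ∀ k ∈ Finset.range n,
        pqBinom p q (n + 1) (k + 1) * p ^ ((k + 1) * (k + 1 - 1) / 2) * x ^ (k + 1) *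
          pqPow p q 1 x (n + 1 - (k + 1)) = F (k + 1) + G k := by
      intro k hk
      have hkn : k < n := Finset.mem_range.mp hk
      have hpas := pqBinom_pascal hq hqp (n - 1 - k) k
      rw [show n - 1 - k + k + 2 = n + 1 by omega, show n - 1 - k + k + 1 = n by omega,
        show n - 1 - k + 1 = n - k by omega] at hpas
      rw [hF, hG]
      simp only [Nat.add_sub_cancel, Nat.succ_sub_succ_eq_sub]
      simp only [Nat.sub_zero]
      rw [hpas, show (k + 1) * k = k * (k + 1) by ring]
      ring
    have h0 : pqBinom p q (n + 1) 0 * p ^ (0 * (0 - 1) / 2) * x ^ 0 * pqPow p q 1 x (n + 1 - 0)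
        = F 0 := by
      rw [hF]
      simp [pqBinom_zero hq hqp]
    have hlast : pqBinom p q (n + 1) (n + 1) * p ^ ((n + 1) * (n + 1 - 1) / 2) * x ^ (n + 1) *
        pqPow p q 1 x (n + 1 - (n + 1)) = G n := by
      rw [hG]
      simp only [Nat.add_sub_cancel, Nat.sub_self]
      rw [pqBinom_self hq hqp, pqBinom_self hq hqp, show (n + 1) * n = n * (n + 1) by ring]
      simp [pqPow]
    rw [Finset.sum_range_succ, Finset.sum_range_succ', hlast, h0,
      Finset.sum_congr rfl hmid, Finset.sum_add_distrib]
    have hcomb : ∑ k ∈ Finset.range n, F (k + 1) + ∑ k ∈ Finset.range n, G k + F 0 + G n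
        = ∑ k ∈ Finset.range (n + 1), (F k + G k) := by
      rw [Finset.sum_add_distrib, Finset.sum_range_succ' F n, Finset.sum_range_succ G n]
      ring
    rw [hcomb, Finset.sum_congr rfl key, ← Finset.mul_sum, ih, ← pow_add]
    congr 1
    rw [Nat.add_sub_cancel, show (n + 1) * n = n * (n + 1) by ring, tri_succ]
    omega

end Moments

section MomentSums

variable {p q : ℝ}

lemma tri2 (k : ℕ) : (k + 2) * (k + 1) / 2 = k * (k - 1) / 2 + (2 * k + 1) := by
  have h1 := tri_succ (k + 1)
  have h2 := tri_succ k
  rw [Nat.add_sub_cancel] at h1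
  rw [show (k + 2) * (k + 1) = (k + 1) * (k + 1 + 1) by ring, h1,
    show (k + 1) * k = k * (k + 1) by ring, h2]
  omega

/-- First moment sum, unnormalized. -/
lemma sumU1 (hq : 0 < q) (hqp : q < p) (x : ℝ) (n : ℕ) :
    ∑ k ∈ Finset.range (n + 1),
      pqBinom p q n k * p ^ (k * (k - 1) / 2) * x ^ k * pqPow p q 1 x (n - k) *
        (p ^ (n - k) * pqNum p q k) =
      pqNum p q n * x * p ^ (n * (n - 1) / 2) := by
  have hp0 : (0:ℝ) < p := pq_p_pos hq hqp
  cases n with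
  | zero => simp [pqNum_zero]
  | succ m =>
    rw [Finset.sum_range_succ']
    have h0 : pqBinom p q (m+1) 0 * p ^ (0 * (0 - 1) / 2) * x ^ 0 * pqPow p q 1 x (m + 1 - 0) *
        (p ^ (m + 1 - 0) * pqNum p q 0) = 0 := by simp [pqNum_zero]
    rw [h0, add_zero]
    have key : ∀ k ∈ Finset.range (m + 1),
        pqBinom p q (m+1) (k+1) * p ^ ((k+1) * (k+1-1) / 2) * x ^ (k+1) *
            pqPow p q 1 x (m + 1 - (k+1)) * (p ^ (m + 1 - (k+1)) * pqNum p q (k+1)) =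
        pqNum p q (m+1) * x * p ^ m *
          (pqBinom p q m k * p ^ (k * (k - 1) / 2) * x ^ k * pqPow p q 1 x (m - k)) := by
      intro k hk
      have hkm : k ≤ m := by simpa using Nat.lt_succ_iff.mp (Finset.mem_range.mp hk)
      have hbm := pqBinom_mul hq hqp (m - k) k
      rw [show m - k + k + 1 = m + 1 by omega, show m - k + k = m by omega] at hbm
      have hexp : (p:ℝ) ^ ((k+1) * k / 2) * p ^ (m - k) = p ^ (k * (k - 1) / 2) * p ^ m := by
        rw [← pow_add, ← pow_add, show (k+1) * k = k * (k + 1) by ring, tri_succ]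
        congr 1
        omega
      simp only [Nat.add_sub_cancel, Nat.succ_sub_succ_eq_sub, Nat.sub_zero]
      rw [pow_succ x k]
      linear_combination (x ^ k * x * pqPow p q 1 x (m - k)) *
          (p ^ ((k+1) * k / 2) * p ^ (m - k) * hbm
            + pqNum p q (m+1) * pqBinom p q m k * hexp)
    rw [Finset.sum_congr rfl key, ← Finset.mul_sum, sumT hq hqp, mul_assoc, ← pow_add]
    rw [show m + m * (m - 1) / 2 = (m + 1) * (m + 1 - 1) / 2 by
      rw [Nat.add_sub_cancel, show (m+1) * m = m * (m + 1) by ring, tri_succ]; omega]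

/-- Second moment sum, unnormalized. -/
lemma sumU2 (hq : 0 < q) (hqp : q < p) (x : ℝ) (n : ℕ) :
    ∑ k ∈ Finset.range (n + 1),
      pqBinom p q n k * p ^ (k * (k - 1) / 2) * x ^ k * pqPow p q 1 x (n - k) *
        (p ^ (2 * (n - k)) * (pqNum p q k * pqNum p q (k - 1))) =
      pqNum p q n * pqNum p q (n - 1) * x ^ 2 * p ^ (n * (n - 1) / 2) := by
  have hp0 : (0:ℝ) < p := pq_p_pos hq hqp
  match n with
  | 0 => simp [pqNum_zero]
  | 1 =>
    rw [Finset.sum_range_succ, Finset.sum_range_succ]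
    simp [pqNum_zero]
  | (m+2) =>
    rw [Finset.sum_range_succ', Finset.sum_range_succ']
    have h0 : pqBinom p q (m+2) 0 * p ^ (0 * (0 - 1) / 2) * x ^ 0 * pqPow p q 1 x (m + 2 - 0) *
        (p ^ (2 * (m + 2 - 0)) * (pqNum p q 0 * pqNum p q (0 - 1))) = 0 := by
      simp [pqNum_zero]
    have h1 : pqBinom p q (m+2) (0+1) * p ^ ((0+1) * (0+1-1) / 2) * x ^ (0+1) *
        pqPow p q 1 x (m + 2 - (0+1)) *
        (p ^ (2 * (m + 2 - (0+1))) * (pqNum p q (0+1) * pqNum p q (0+1-1))) = 0 := by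
      simp [pqNum_zero]
    rw [h0, h1, add_zero, add_zero]
    have key : ∀ k ∈ Finset.range (m + 1),
        pqBinom p q (m+2) (k+1+1) * p ^ ((k+1+1) * (k+1+1-1) / 2) * x ^ (k+1+1) *
            pqPow p q 1 x (m + 2 - (k+1+1)) *
            (p ^ (2 * (m + 2 - (k+1+1))) * (pqNum p q (k+1+1) * pqNum p q (k+1+1-1))) =
        pqNum p q (m+2) * pqNum p q (m+1) * x ^ 2 * p ^ (2 * m + 1) *
          (pqBinom p q m k * p ^ (k * (k - 1) / 2) * x ^ k * pqPow p q 1 x (m - k)) := by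
      intro k hk
      have hkm : k ≤ m := by simpa using Nat.lt_succ_iff.mp (Finset.mem_range.mp hk)
      have hb1 := pqBinom_mul hq hqp (m - k) (k + 1)
      rw [show m - k + (k + 1) + 1 = m + 2 by omega, show m - k + (k + 1) = m + 1 by omega] at hb1
      have hb2 := pqBinom_mul hq hqp (m - k) k
      rw [show m - k + k + 1 = m + 1 by omega, show m - k + k = m by omega] at hb2
      have hexp : (p:ℝ) ^ ((k+2) * (k+1) / 2) * p ^ (2 * (m - k)) =
          p ^ (k * (k - 1) / 2) * p ^ (2 * m + 1) := by
        rw [← pow_add, ← pow_add, tri2]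
        congr 1
        omega
      simp only [Nat.add_sub_cancel, Nat.succ_sub_succ_eq_sub, Nat.sub_zero,
        show k+1+1 = k+2 by omega]
      rw [show x ^ (k + 2) = x ^ k * x ^ 2 by ring]
      linear_combination (x ^ k * x ^ 2 * pqPow p q 1 x (m - k)) *
          (p ^ ((k+2) * (k+1) / 2) * p ^ (2 * (m - k)) * pqNum p q (k+1) * hb1
            + p ^ ((k+2) * (k+1) / 2) * p ^ (2 * (m - k)) * pqNum p q (m+2) * hb2
            + pqNum p q (m+2) * pqNum p q (m+1) * pqBinom p q m k * hexp)
    rw [Finset.sum_congr rfl key, ← Finset.mul_sum, sumT hq hqp, mul_assoc, ← pow_add]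
    rw [show 2 * m + 1 + m * (m - 1) / 2 = (m + 2) * (m + 2 - 1) / 2 by
      rw [show m + 2 - 1 = m + 1 from rfl, tri2]; omega,
      show m + 2 - 1 = m + 1 from rfl]

end MomentSums
section Integral

set_option maxHeartbeats 1000000

variable {p q : ℝ}

lemma u_eq (hq : 0 < q) (hqp : q < p) (k : ℕ) :
    q ^ k / p ^ (k + 1) = (q / p) ^ k * p⁻¹ := by
  have hp0 : (0:ℝ) < p := pq_p_pos hq hqp
  rw [div_pow, pow_succ]
  field_simp

lemma r_lt_one (hq : 0 < q) (hqp : q < p) : q / p < 1 :=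
  (div_lt_one (pq_p_pos hq hqp)).mpr hqp

lemma pqPow_bound (hq : 0 < q) (hqp : q < p) (hp : p ≤ 1) (b k : ℕ) :
    |pqPow p q 1 (q * (q ^ k / p ^ (k + 1))) b| ≤ 2 ^ b := by
  have hp0 : (0:ℝ) < p := pq_p_pos hq hqp
  rw [pqPow, Finset.abs_prod]
  calc ∏ j ∈ Finset.range b, |p ^ j * 1 - q ^ j * (q * (q ^ k / p ^ (k + 1)))|
      ≤ ∏ j ∈ Finset.range b, 2 := by
        refine Finset.prod_le_prod (fun j _ => abs_nonneg _) (fun j _ => ?_)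
        have h1 : (0:ℝ) < p ^ (k + 1) := pow_pos hp0 _
        have h2 : p ^ j * 1 ≤ 1 := by
          rw [mul_one]; exact pow_le_one₀ hp0.le hp
        have h3 : (0:ℝ) ≤ p ^ j * 1 := by positivity
        have h4 : (0:ℝ) ≤ q ^ j * (q * (q ^ k / p ^ (k + 1))) := by positivity
        have h5 : q ^ j * (q * (q ^ k / p ^ (k + 1))) ≤ 1 := by
          rw [show q ^ j * (q * (q ^ k / p ^ (k + 1))) = q ^ j * (q * q ^ k) / p ^ (k + 1)
            by ring, div_le_one h1]
          calc q ^ j * (q * q ^ k) ≤ 1 * (q * q ^ k) := by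
                have : q ^ j ≤ 1 := pow_le_one₀ hq.le (by linarith)
                nlinarith [mul_pos hq (pow_pos hq k)]
            _ = q ^ (k + 1) := by rw [one_mul, pow_succ]; ring
            _ ≤ p ^ (k + 1) := pow_le_pow_left₀ hq.le hqp.le (k + 1)
        rw [abs_le]
        constructor <;> nlinarith
    _ = 2 ^ b := by rw [Finset.prod_const, Finset.card_range]

lemma summable_aux (hq : 0 < q) (hqp : q < p) (hp : p ≤ 1) (a b : ℕ) :
    Summable (fun k : ℕ => (q ^ k / p ^ (k + 1)) *
      ((q ^ k / p ^ (k + 1)) ^ a * pqPow p q 1 (q * (q ^ k / p ^ (k + 1))) b)) := by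
  have hp0 : (0:ℝ) < p := pq_p_pos hq hqp
  have hr0 : (0:ℝ) ≤ q / p := by positivity
  have hr1 : q / p < 1 := r_lt_one hq hqp
  refine Summable.of_norm_bounded
    (g := fun k => ((p⁻¹) ^ (a + 1) * 2 ^ b) * (q / p) ^ k) ?_ ?_
  · exact (summable_geometric_of_lt_one hr0 hr1).mul_left _
  · intro k
    have hu0 : (0:ℝ) < q ^ k / p ^ (k + 1) := by positivity
    have hu1 : q ^ k / p ^ (k + 1) ≤ p⁻¹ := by
      rw [u_eq hq hqp]
      have : (q / p) ^ k ≤ 1 := pow_le_one₀ hr0 hr1.le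
      nlinarith [inv_pos.mpr hp0]
    rw [Real.norm_eq_abs, abs_mul, abs_mul, abs_of_pos hu0, abs_of_pos (pow_pos hu0 a)]
    have hPb := pqPow_bound hq hqp hp b k
    calc q ^ k / p ^ (k + 1) * ((q ^ k / p ^ (k + 1)) ^ a *
          |pqPow p q 1 (q * (q ^ k / p ^ (k + 1))) b|)
        ≤ q ^ k / p ^ (k + 1) * ((p⁻¹) ^ a * 2 ^ b) := by
          have h := pow_le_pow_left₀ hu0.le hu1 a
          gcongr
      _ = (p⁻¹) ^ (a + 1) * 2 ^ b * (q / p) ^ k := by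
          rw [u_eq hq hqp, pow_succ]
          ring

lemma pqInt_linear (hq : 0 < q) (hqp : q < p) (c d : ℝ) (f g : ℝ → ℝ)
    (hf : Summable (fun k : ℕ => (q ^ k / p ^ (k + 1)) * f (q ^ k / p ^ (k + 1))))
    (hg : Summable (fun k : ℕ => (q ^ k / p ^ (k + 1)) * g (q ^ k / p ^ (k + 1)))) :
    pqInt p q (fun t => c * f t - d * g t) = c * pqInt p q f - d * pqInt p q g := by
  unfold pqInt
  have h1 : ∀ k : ℕ, (q ^ k / p ^ (k + 1)) *
      (c * f (q ^ k / p ^ (k + 1)) - d * g (q ^ k / p ^ (k + 1))) =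
      c * ((q ^ k / p ^ (k + 1)) * f (q ^ k / p ^ (k + 1))) -
        d * ((q ^ k / p ^ (k + 1)) * g (q ^ k / p ^ (k + 1))) := fun k => by ring
  rw [tsum_congr h1, Summable.tsum_sub (hf.mul_left c) (hg.mul_left d),
    tsum_mul_left, tsum_mul_left]
  ring

/-- Closed form for ∫ t^a (1 ⊖ qt)^b d_{p,q}t. -/
lemma pqInt_pow_pqPow (hq : 0 < q) (hqp : q < p) (hp : p ≤ 1) (b a : ℕ) :
    pqInt p q (fun t => t ^ a * pqPow p q 1 (q * t) b) =
      p ^ (b * (b + 1) / 2 + a * b) *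
        (pqFactorial p q a * pqFactorial p q b / pqFactorial p q (a + b + 1)) := by
  have hp0 : (0:ℝ) < p := pq_p_pos hq hqp
  induction b generalizing a with
  | zero =>
    have hr0 : (0:ℝ) ≤ q / p := by positivity
    have hr1 : q / p < 1 := r_lt_one hq hqp
    have hpow0 : ∀ t : ℝ, pqPow p q 1 (q * t) 0 = 1 := fun t => by simp [pqPow]
    unfold pqInt
    have h1 : ∀ k : ℕ, (q ^ k / p ^ (k + 1)) *
        ((q ^ k / p ^ (k + 1)) ^ a * pqPow p q 1 (q * (q ^ k / p ^ (k + 1))) 0) =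
        (p⁻¹) ^ (a + 1) * (((q / p) ^ (a + 1)) ^ k) := by
      intro k
      rw [hpow0, mul_one, u_eq hq hqp, ← pow_succ', mul_pow, ← pow_mul,
        Nat.mul_comm k (a + 1), pow_mul]
      ring
    rw [tsum_congr h1, tsum_mul_left,
      tsum_geometric_of_lt_one (by positivity) (pow_lt_one₀ hr0 hr1 (by omega))]
    have hne1 : 1 - (q / p) ^ (a + 1) ≠ 0 := by
      have := pow_lt_one₀ hr0 hr1 (n := a + 1) (by omega)
      linarith
    have hfa := pqFactorial_ne hq hqp a
    have hnum : (0:ℝ) < p ^ (a + 1) - q ^ (a + 1) := by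
      have := pow_lt_pow_left₀ hqp hq.le (n := a + 1) (by omega)
      linarith
    rw [show a + 0 + 1 = a + 1 by omega, pqFactorial_succ, pqFactorial_zero]
    rw [pqNum]
    have hpa : p ^ a * p⁻¹ ^ a = 1 := by rw [← mul_pow, mul_inv_cancel₀ hp0.ne', one_pow]
    have hp1 : p * p⁻¹ = 1 := mul_inv_cancel₀ hp0.ne'
    field_simp
    linear_combination (p - q) * (p ^ a * p⁻¹ ^ a) * hp1 + (p - q) * hpa
  | succ b ih =>
    have hsplit : (fun t : ℝ => t ^ a * pqPow p q 1 (q * t) (b + 1)) =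
        (fun t : ℝ => p ^ b * (t ^ a * pqPow p q 1 (q * t) b) -
          q ^ (b + 1) * (t ^ (a + 1) * pqPow p q 1 (q * t) b)) := by
      funext t
      rw [pqPow, Finset.prod_range_succ, ← pqPow, pow_succ q b]
      ring
    have hlin : pqInt p q (fun t => p ^ b * (t ^ a * pqPow p q 1 (q * t) b) -
          q ^ (b + 1) * (t ^ (a + 1) * pqPow p q 1 (q * t) b)) =
        p ^ b * pqInt p q (fun t => t ^ a * pqPow p q 1 (q * t) b) -
          q ^ (b + 1) * pqInt p q (fun t => t ^ (a + 1) * pqPow p q 1 (q * t) b) :=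
      pqInt_linear hq hqp _ _ _ _ (summable_aux hq hqp hp a b)
        (summable_aux hq hqp hp (a + 1) b)
    rw [hsplit, hlin, ih a, ih (a + 1)]
    -- exponent bookkeeping
    have e1 : b * (b + 1) / 2 + (a + 1) * b = (b * (b + 1) / 2 + a * b) + b := by ring
    have e2 : (b + 1) * (b + 1 + 1) / 2 + a * (b + 1) =
        (b * (b + 1) / 2 + a * b) + (b + (a + 1)) := by
      obtain ⟨c, hc⟩ := Nat.even_mul_succ_self b
      have h1 : (b + 1) * (b + 1 + 1) = 2 * c + 2 * (b + 1) := by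
        rw [show (b + 1) * (b + 1 + 1) = b * (b + 1) + 2 * (b + 1) by ring, hc]; ring
      have h2 : b * (b + 1) = 2 * c := by rw [hc]; ring
      have h3 : a * (b + 1) = a * b + a := by ring
      omega
    rw [e1, e2, pow_add, pow_add, pow_add]
    have hkey : pqNum p q (a + 1 + (b + 1)) =
        p ^ (a + 1) * pqNum p q (b + 1) + q ^ (b + 1) * pqNum p q (a + 1) :=
      pqNum_add hqp (a + 1) (b + 1)
    rw [show a + 1 + (b + 1) = a + b + 2 by omega] at hkey
    rw [show a + (b + 1) + 1 = (a + b + 1) + 1 by omega,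
      show a + 1 + b + 1 = (a + b + 1) + 1 by omega,
      pqFactorial_succ (a + b + 1), pqFactorial_succ a, pqFactorial_succ b,
      show a + b + 1 + 1 = a + b + 2 by omega, hkey]
    have hfa := pqFactorial_ne hq hqp a
    have hfb := pqFactorial_ne hq hqp b
    have hfab := pqFactorial_ne hq hqp (a + b + 1)
    have hnab : pqNum p q (a + b + 2) ≠ 0 := pqNum_ne hq hqp (by omega)
    rw [hkey] at hnab
    field_simp
    linear_combination (-(p ^ b * p ^ (a * b) * p ^ (b * (b + 1) / 2))) * inv_mul_cancel₀ hnab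

end Integral
section Assemble

variable {p q : ℝ}

lemma pqInt_const_mul (c : ℝ) (f : ℝ → ℝ) :
    pqInt p q (fun t => c * f t) = c * pqInt p q f := by
  unfold pqInt
  have h : ∀ k : ℕ, (q ^ k / p ^ (k + 1)) * (c * f (q ^ k / p ^ (k + 1))) =
      c * ((q ^ k / p ^ (k + 1)) * f (q ^ k / p ^ (k + 1))) := fun k => by ring
  rw [tsum_congr h, tsum_mul_left]
  ring

/-- Evaluation of one term of the Durrmeyer sum, with n = j + d + 1, k = j + 1. -/
lemma term_eval (hq : 0 < q) (hqp : q < p) (hp : p ≤ 1) (j d : ℕ) (x : ℝ) :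
    pqNum p q (j + d + 2) *
      ((p ^ ((d + 1) * ((j + d + 1) + (j + 1)) / 2))⁻¹ * bBasis p q (j + d + 1) (j + 1) x *
        pqInt p q (fun t => bKernel p q (j + d + 1) j t * t ^ 2)) =
    bBasis p q (j + d + 1) (j + 1) x *
      (p ^ (2 * d + 2) * (pqNum p q (j + 1) * pqNum p q (j + 2))) /
        (pqNum p q (j + d + 3) * pqNum p q (j + d + 4)) := by
  have hp0 : (0:ℝ) < p := pq_p_pos hq hqp
  have hker : (fun t : ℝ => bKernel p q (j + d + 1) j t * t ^ 2) =
      fun t : ℝ => pqBinom p q (j + d + 1) j * (t ^ (j + 2) * pqPow p q 1 (q * t) (d + 1)) := by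
    funext t
    rw [bKernel, show j + d + 1 - j = d + 1 by omega]
    ring
  rw [hker, pqInt_const_mul, pqInt_pow_pqPow hq hqp hp (d + 1) (j + 2),
    show j + 2 + (d + 1) + 1 = j + d + 4 by omega]
  -- exponent bookkeeping
  have hexp : (p:ℝ) ^ ((d + 1) * (d + 1 + 1) / 2 + (j + 2) * (d + 1)) =
      p ^ ((d + 1) * ((j + d + 1) + (j + 1)) / 2) * p ^ (2 * d + 2) := by
    rw [← pow_add]
    congr 1
    obtain ⟨c, hc⟩ := Nat.even_mul_succ_self d
    have h1 : (d + 1) * (d + 1 + 1) = 2 * c + 2 * (d + 1) := by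
      rw [show (d + 1) * (d + 1 + 1) = d * (d + 1) + 2 * (d + 1) by ring, hc]; ring
    have h2 : (d + 1) * ((j + d + 1) + (j + 1)) = 2 * c + 2 * ((d + 1) * (j + 1)) := by
      rw [show (d + 1) * ((j + d + 1) + (j + 1)) = d * (d + 1) + 2 * ((d + 1) * (j + 1))
        by ring, hc]; ring
    have h3 : (j + 2) * (d + 1) = (d + 1) * (j + 1) + (d + 1) := by ring
    omega
  rw [hexp]
  -- binomial and factorial expansion
  rw [show pqBinom p q (j + d + 1) j = pqFactorial p q (j + d + 1) /
      (pqFactorial p q (d + 1) * pqFactorial p q j) by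
    rw [pqBinom, show j + d + 1 - j = d + 1 by omega]]
  rw [show pqFactorial p q (j + 2) = pqFactorial p q j * pqNum p q (j + 1) * pqNum p q (j + 2) by
    rw [show j + 2 = j + 1 + 1 by omega, pqFactorial_succ, pqFactorial_succ]]
  rw [show pqFactorial p q (j + d + 4) = pqFactorial p q (j + d + 1) * pqNum p q (j + d + 2) *
      pqNum p q (j + d + 3) * pqNum p q (j + d + 4) by
    rw [show j + d + 4 = j + d + 3 + 1 by omega, pqFactorial_succ,
      show j + d + 3 = j + d + 2 + 1 by omega, pqFactorial_succ,
      show j + d + 2 = j + d + 1 + 1 by omega, pqFactorial_succ]]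
  have hT : (p:ℝ) ^ ((d + 1) * ((j + d + 1) + (j + 1)) / 2) ≠ 0 := by positivity
  have hfj := pqFactorial_ne hq hqp j
  have hfd := pqFactorial_ne hq hqp (d + 1)
  have hfn := pqFactorial_ne hq hqp (j + d + 1)
  have h2 := pqNum_ne hq hqp (m := j + d + 2) (by omega)
  have h3 := pqNum_ne hq hqp (m := j + d + 3) (by omega)
  have h4 := pqNum_ne hq hqp (m := j + d + 4) (by omega)
  field_simp

end Assemble
theorem pqDurrmeyer_e2 (p q : ℝ) (hq : 0 < q) (hqp : q < p) (hp : p ≤ 1)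
    (n : ℕ) (x : ℝ) (hx : x ∈ Set.Icc (0 : ℝ) 1) :
    pqDurrmeyer p q n (fun t => t ^ 2) x =
      (p + q) * p ^ (n + 1) * pqNum p q n * x / (pqNum p q (n + 2) * pqNum p q (n + 3)) +
        (pqNum p q n - p ^ (n - 1)) * p ^ 2 * q * pqNum p q n * x ^ 2 /
          (pqNum p q (n + 2) * pqNum p q (n + 3)) := by
  have hp0 : (0:ℝ) < p := hq.trans hqp
  cases n with
  | zero =>
    simp [pqDurrmeyer, pqNum_zero]
  | succ m =>
    simp only [pqDurrmeyer]
    rw [show m + 1 + 2 = m + 3 from rfl, show m + 1 + 3 = m + 4 from rfl,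
      show m + 1 - 1 = m from rfl]
    rw [show Finset.Icc 1 (m + 1) = Finset.Ico 1 (m + 2) from (Finset.Ico_add_one_right_eq_Icc 1 (m+1)),
      Finset.sum_Ico_eq_sum_range, show m + 2 - 1 = m + 1 from rfl, Finset.mul_sum]
    -- rewrite each term via term_eval
    have hterm : ∀ j ∈ Finset.range (m + 1),
        pqNum p q (m + 1 + 1) *
          ((p ^ ((m + 1 - (1 + j) + 1) * (m + 1 + (1 + j)) / 2))⁻¹ * bBasis p q (m + 1) (1 + j) x *
            pqInt p q fun t => bKernel p q (m + 1) (1 + j - 1) t * t ^ 2) =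
        bBasis p q (m + 1) (j + 1) x *
          (p ^ (2 * (m - j) + 2) * (pqNum p q (j + 1) * pqNum p q (j + 2))) /
            (pqNum p q (m + 3) * pqNum p q (m + 4)) := by
      intro j hj
      have hjm : j ≤ m := by simpa using Nat.lt_succ_iff.mp (Finset.mem_range.mp hj)
      have h := term_eval hq hqp hp j (m - j) x
      rw [show j + (m - j) + 1 = m + 1 by omega, show j + (m - j) + 2 = m + 2 by omega,
        show j + (m - j) + 3 = m + 3 by omega, show j + (m - j) + 4 = m + 4 by omega] at h
      rw [show 1 + j = j + 1 by omega, show j + 1 - 1 = j from rfl,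
        show m + 1 - (j + 1) + 1 = m - j + 1 by omega, show m + 1 + (j + 1) = m + 1 + (j + 1) from rfl,
        show m + 1 + 1 = m + 2 from rfl]
      exact h
    rw [Finset.sum_congr rfl hterm]
    rw [show (0:ℝ) ^ 2 = 0 by norm_num, mul_zero, add_zero]
    set W : ℕ → ℝ := fun k => bBasis p q (m + 1) k x *
      (p ^ (2 * (m + 1 - k) + 2) * (pqNum p q k * pqNum p q (k + 1))) with hWdef
    have hsum : ∑ j ∈ Finset.range (m + 1),
        bBasis p q (m + 1) (j + 1) x *
          (p ^ (2 * (m - j) + 2) * (pqNum p q (j + 1) * pqNum p q (j + 2))) /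
            (pqNum p q (m + 3) * pqNum p q (m + 4)) =
        (∑ k ∈ Finset.range (m + 2), W k) / (pqNum p q (m + 3) * pqNum p q (m + 4)) := by
      rw [Finset.sum_div, Finset.sum_range_succ'
        (fun i => W i / (pqNum p q (m + 3) * pqNum p q (m + 4))) (m + 1)]
      have hW0 : W 0 / (pqNum p q (m + 3) * pqNum p q (m + 4)) = 0 := by
        rw [hWdef]
        simp [pqNum_zero]
      rw [hW0, add_zero]
      refine Finset.sum_congr rfl fun j hj => ?_
      rw [hWdef]
      simp only []
      rw [show m + 1 - (j + 1) = m - j by omega, show j + 1 + 1 = j + 2 from rfl]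
    rw [hsum]
    -- moment sums
    have hS1 : ∑ k ∈ Finset.range (m + 2),
        bBasis p q (m + 1) k x * (p ^ (m + 1 - k) * pqNum p q k) = pqNum p q (m + 1) * x := by
      have h1 : ∀ k ∈ Finset.range (m + 2),
          bBasis p q (m + 1) k x * (p ^ (m + 1 - k) * pqNum p q k) =
          pqBinom p q (m + 1) k * p ^ (k * (k - 1) / 2) * x ^ k * pqPow p q 1 x (m + 1 - k) *
            (p ^ (m + 1 - k) * pqNum p q k) * (p ^ ((m + 1) * (m + 1 - 1) / 2))⁻¹ :=
        fun k _ => by rw [bBasis]; ring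
      rw [Finset.sum_congr rfl h1, ← Finset.sum_mul, sumU1 hq hqp x (m + 1)]
      have hPne : (p:ℝ) ^ ((m + 1) * (m + 1 - 1) / 2) ≠ 0 := by positivity
      field_simp
    have hS2 : ∑ k ∈ Finset.range (m + 2),
        bBasis p q (m + 1) k x * (p ^ (2 * (m + 1 - k)) * (pqNum p q k * pqNum p q (k - 1))) =
        pqNum p q (m + 1) * pqNum p q m * x ^ 2 := by
      have h1 : ∀ k ∈ Finset.range (m + 2),
          bBasis p q (m + 1) k x * (p ^ (2 * (m + 1 - k)) * (pqNum p q k * pqNum p q (k - 1))) =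
          pqBinom p q (m + 1) k * p ^ (k * (k - 1) / 2) * x ^ k * pqPow p q 1 x (m + 1 - k) *
            (p ^ (2 * (m + 1 - k)) * (pqNum p q k * pqNum p q (k - 1))) *
            (p ^ ((m + 1) * (m + 1 - 1) / 2))⁻¹ :=
        fun k _ => by rw [bBasis]; ring
      rw [Finset.sum_congr rfl h1, ← Finset.sum_mul, sumU2 hq hqp x (m + 1),
        show m + 1 - 1 = m from rfl]
      have hPne : (p:ℝ) ^ ((m + 1) * m / 2) ≠ 0 := by positivity
      field_simp
    -- decompose W
    have hWd : ∀ k ∈ Finset.range (m + 2),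
        W k = (p ^ 2 * (p ^ (m + 1) + q * p ^ m)) *
            (bBasis p q (m + 1) k x * (p ^ (m + 1 - k) * pqNum p q k)) +
          (p ^ 2 * q ^ 2) *
            (bBasis p q (m + 1) k x *
              (p ^ (2 * (m + 1 - k)) * (pqNum p q k * pqNum p q (k - 1)))) := by
      intro k hk
      have hkm : k ≤ m + 1 := by
        have := Finset.mem_range.mp hk
        omega
      rw [hWdef]
      simp only []
      cases k with
      | zero => simp [pqNum_zero]
      | succ j =>
        have hjm : j ≤ m := by omega
        rw [show m + 1 - (j + 1) = m - j by omega, show j + 1 - 1 = j from rfl]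
        have hA : (p:ℝ) ^ (2 * (m - j) + 2) * p ^ (j + 1) = p ^ 2 * p ^ (m + 1) * p ^ (m - j) := by
          rw [← pow_add, ← pow_add, ← pow_add]
          congr 1
          omega
        have hB : (p:ℝ) ^ (2 * (m - j) + 2) * p ^ j = p ^ 2 * p ^ m * p ^ (m - j) := by
          rw [← pow_add, ← pow_add, ← pow_add]
          congr 1
          omega
        have hC : (p:ℝ) ^ (2 * (m - j) + 2) = p ^ 2 * p ^ (2 * (m - j)) := by
          rw [← pow_add]
          congr 1
          omega
        have hv := pqNum_succ hqp (j + 1)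
        have hu := pqNum_succ hqp j
        set bB := bBasis p q (m + 1) (j + 1) x
        set u := pqNum p q (j + 1)
        set w := pqNum p q j
        rw [show j + 1 + 1 = j + 2 from rfl] at hv
        linear_combination (bB * p ^ (2 * (m - j) + 2) * u) * hv
          + (bB * p ^ (2 * (m - j) + 2) * u * q) * hu
          + (bB * u) * hA + (bB * u * q) * hB
          + (bB * u * w * q ^ 2) * hC
    rw [Finset.sum_congr rfl hWd, Finset.sum_add_distrib, ← Finset.mul_sum, ← Finset.mul_sum,
      hS1, hS2]
    -- final algebra
    have hD3 := pqNum_ne hq hqp (m := m + 3) (by omega)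
    have hD4 := pqNum_ne hq hqp (m := m + 4) (by omega)
    have hms := pqNum_succ hqp m
    rw [← add_div, div_eq_div_iff (by exact mul_ne_zero hD3 hD4) (by exact mul_ne_zero hD3 hD4)]
    linear_combination (-(p ^ 2 * q * pqNum p q (m + 1) * x ^ 2 *
      (pqNum p q (m + 3) * pqNum p q (m + 4)))) * hms
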